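/- Let q be a prime power, r a positive integer, and B(X) a polynomial with coefficients in F_{q^2}. Then X^r · B(X^{q-1}) permutes F_{q^2} if and only if gcd(r, q-1) = 1 and the map x ↦ x^r · B(x)^{q-1} permutes the set μ_{q+1} of (q+1)-th roots of unity in F_{q^2}. -/

import Mathlib

/-- `X^r B(X^{q-1})` permutes `F_{q^2}` iff `gcd(r,q-1)=1` and
`x ↦ x^r B(x)^{q-1}` permutes `μ_{q+1}`. -/
theorem stmt0 (q : ℕ) (hq : ∃ p k : ℕ, p.Prime ∧ 0 < k ∧ q = p ^ k)
    (F : Type*) [Field F] [Fintype F] (hF : Fintype.card F = q ^ 2)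
    (r : ℕ) (hr : 0 < r) (B : Polynomial F) :
    Function.Bijective (fun x : F => x ^ r * B.eval (x ^ (q - 1))) ↔
      (Nat.gcd r (q - 1) = 1 ∧
        Set.BijOn (fun x : F => x ^ r * (B.eval x) ^ (q - 1))
          {x : F | x ^ (q + 1) = 1} {x : F | x ^ (q + 1) = 1}) := by
  classical
  have hq2 : 2 ≤ q := by
    obtain ⟨p, k, hp, hk, rfl⟩ := hq
    calc 2 = 2 ^ 1 := (pow_one 2).symm
    _ ≤ 2 ^ k := Nat.pow_le_pow_right two_pos hk
    _ ≤ p ^ k := Nat.pow_le_pow_left hp.two_le k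
  set f : F → F := fun x : F => x ^ r * B.eval (x ^ (q - 1)) with hf
  set g : F → F := fun x : F => x ^ r * (B.eval x) ^ (q - 1) with hg
  set μ : Set F := {x : F | x ^ (q + 1) = 1} with hμ
  have hqq : (q - 1) * (q + 1) = q ^ 2 - 1 := by
    obtain ⟨a, rfl⟩ : ∃ a, q = a + 1 := ⟨q - 1, by omega⟩
    simp only [Nat.add_sub_cancel]
    exact Nat.eq_sub_of_add_eq (by ring)
  have hq2pos : 0 < q ^ 2 - 1 := by
    have : 2 ^ 2 ≤ q ^ 2 := Nat.pow_le_pow_left hq2 2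
    omega
  -- the commutation identity f(x)^{q-1} = g(x^{q-1})
  have hcomm : ∀ x : F, (f x) ^ (q - 1) = g (x ^ (q - 1)) := by
    intro x
    simp only [hf, hg]
    rw [mul_pow, pow_right_comm]
  -- powers of order q^2-1 are 1
  have hpow1 : ∀ x : F, x ≠ 0 → x ^ (q ^ 2 - 1) = 1 := by
    intro x hx
    have := FiniteField.pow_card_sub_one_eq_one x hx
    rwa [hF] at this
  -- membership of x^{q-1} in μ
  have hmem : ∀ x : F, x ≠ 0 → x ^ (q - 1) ∈ μ := by
    intro x hx
    show (x ^ (q - 1)) ^ (q + 1) = 1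
    rw [← pow_mul, hqq]
    exact hpow1 x hx
  have hμne : ∀ y ∈ μ, y ≠ (0 : F) := by
    intro y hy h0
    subst h0
    simp only [hμ, Set.mem_setOf_eq, zero_pow (by omega : q + 1 ≠ 0)] at hy
    exact zero_ne_one hy
  -- surjectivity of x ↦ x^{q-1} onto μ
  have hsurjφ : ∀ y ∈ μ, ∃ x : F, x ≠ 0 ∧ x ^ (q - 1) = y := by
    intro y hy
    have hy0 : y ≠ 0 := hμne y hy
    lift y to Fˣ using isUnit_iff_ne_zero.mpr hy0
    obtain ⟨ζ, hζ⟩ := IsCyclic.exists_generator (α := Fˣ)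
    have hord : orderOf ζ = q ^ 2 - 1 := by
      rw [orderOf_eq_card_of_forall_mem_zpowers hζ, Nat.card_eq_fintype_card,
        Fintype.card_units, hF]
    obtain ⟨m, hm0⟩ := mem_powers_iff_mem_zpowers.mpr (hζ y)
    have hm : ζ ^ m = y := hm0
    have hyu : y ^ (q + 1) = 1 := by
      have : ((y : F)) ^ (q + 1) = 1 := hy
      exact Units.ext (by push_cast; exact this)
    have h1 : ζ ^ (m * (q + 1)) = 1 := by rw [pow_mul, hm, hyu]
    have hdvd : (q - 1) * (q + 1) ∣ m * (q + 1) := by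
      rw [hqq, ← hord]
      exact orderOf_dvd_of_pow_eq_one h1
    have hdvd' : (q - 1) ∣ m := (Nat.mul_dvd_mul_iff_right (by omega : 0 < q + 1)).mp hdvd
    obtain ⟨t, ht⟩ := hdvd'
    refine ⟨((ζ ^ t : Fˣ) : F), Units.ne_zero _, ?_⟩
    have : (ζ ^ t) ^ (q - 1) = y := by
      rw [← pow_mul, mul_comm t (q - 1), ← ht, hm]
    rw [← this]
    push_cast
    ring
  have hf0 : f 0 = 0 := by
    simp only [hf, zero_pow hr.ne', zero_mul]
  constructor
  · -- forward direction
    intro hbij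
    have hfne : ∀ x : F, x ≠ 0 → f x ≠ 0 := by
      intro x hx h0
      exact hx (hbij.injective (h0.trans hf0.symm))
    constructor
    · -- gcd r (q-1) = 1
      by_contra hd
      set d := Nat.gcd r (q - 1) with hdd
      have hdpos : 0 < d := Nat.gcd_pos_of_pos_left _ hr
      have hd2 : 2 ≤ d := by omega
      have hdr : d ∣ r := Nat.gcd_dvd_left _ _
      have hdq : d ∣ q - 1 := Nat.gcd_dvd_right _ _
      have hdq2 : d ∣ q ^ 2 - 1 := hdq.trans (Dvd.intro _ hqq)
      obtain ⟨ζ, hζ⟩ := IsCyclic.exists_generator (α := Fˣ)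
      have hord : orderOf ζ = q ^ 2 - 1 := by
        rw [orderOf_eq_card_of_forall_mem_zpowers hζ, Nat.card_eq_fintype_card,
        Fintype.card_units, hF]
      set e := (q ^ 2 - 1) / d with he
      set c : Fˣ := ζ ^ e with hc
      have hed : e * d = q ^ 2 - 1 := Nat.div_mul_cancel hdq2
      have hcq : c ^ (q - 1) = 1 := by
        obtain ⟨s, hs⟩ := hdq
        rw [hc, ← pow_mul, hs, ← mul_assoc, hed, pow_mul, ← hord, pow_orderOf_eq_one, one_pow]
      have hcr : c ^ r = 1 := by
        obtain ⟨t, ht⟩ := hdr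
        rw [hc, ← pow_mul, ht, ← mul_assoc, hed, pow_mul, ← hord, pow_orderOf_eq_one, one_pow]
      have hcne : c ≠ 1 := by
        intro h1
        have : orderOf ζ ∣ e := orderOf_dvd_of_pow_eq_one h1
        rw [hord] at this
        have hepos : 0 < e := Nat.div_pos (Nat.le_of_dvd hq2pos hdq2) hdpos
        have := Nat.le_of_dvd hepos this
        have hlt : e < q ^ 2 - 1 := Nat.div_lt_self hq2pos hd2
        omega
      have hfeq : f ((c : F)) = f 1 := by
        have h1 : ((c : F)) ^ (q - 1) = 1 := by
          have := congrArg (Units.val) hcq; push_cast at this; exact this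
        have h2 : ((c : F)) ^ r = 1 := by
          have := congrArg (Units.val) hcr; push_cast at this; exact this
        simp only [hf, h1, h2, one_pow, one_mul]
      have := hbij.injective hfeq
      exact hcne (Units.ext (by simpa using this))
    · -- BijOn
      have hmapsTo : Set.MapsTo g μ μ := by
        intro y hy
        obtain ⟨x, hx0, hxy⟩ := hsurjφ y hy
        have : g y = (f x) ^ (q - 1) := by rw [hcomm, hxy]
        show g y ∈ μ
        rw [this]
        exact hmem _ (hfne x hx0)
      have hsurjOn : Set.SurjOn g μ μ := by
        intro y hy
        obtain ⟨u, hu0, huy⟩ := hsurjφ y hy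
        obtain ⟨v, hv⟩ := hbij.surjective u
        have hv0 : v ≠ 0 := by
          intro h0; rw [h0, hf0] at hv; exact hu0 hv.symm
        refine ⟨v ^ (q - 1), hmem v hv0, ?_⟩
        show g (v ^ (q - 1)) = y
        rw [← hcomm, hv, huy]
      exact ((Set.toFinite μ).surjOn_iff_bijOn_of_mapsTo hmapsTo).mp hsurjOn
  · -- backward direction
    rintro ⟨hgcd, hgbij⟩
    have hBne : ∀ x : F, x ≠ 0 → B.eval (x ^ (q - 1)) ≠ 0 := by
      intro x hx hB0
      have hmemx := hmem x hx
      have := hgbij.mapsTo hmemx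
      have h0 : g (x ^ (q - 1)) = 0 := by
        simp only [hg, hB0, zero_pow (by omega : q - 1 ≠ 0), mul_zero]
      rw [h0] at this
      exact hμne 0 this rfl
    have hfne : ∀ x : F, x ≠ 0 → f x ≠ 0 := by
      intro x hx
      simp only [hf]
      exact mul_ne_zero (pow_ne_zero r hx) (hBne x hx)
    have hinj : Function.Injective f := by
      intro x y hxy
      by_cases hx : x = 0
      · by_cases hy : y = 0
        · rw [hx, hy]
        · exfalso; rw [hx, hf0] at hxy; exact hfne y hy hxy.symm
      · by_cases hy : y = 0
        · exfalso; rw [hy, hf0] at hxy; exact hfne x hx hxy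
        · have hgeq : g (x ^ (q - 1)) = g (y ^ (q - 1)) := by
            rw [← hcomm, ← hcomm, hxy]
          have hxyq : x ^ (q - 1) = y ^ (q - 1) :=
            hgbij.injOn (hmem x hx) (hmem y hy) hgeq
          set c : F := x * y⁻¹ with hcdef
          have hc0 : c ≠ 0 := mul_ne_zero hx (inv_ne_zero hy)
          have hcq : c ^ (q - 1) = 1 := by
            rw [hcdef, mul_pow, hxyq, inv_pow, mul_inv_cancel₀ (pow_ne_zero _ hy)]
          have hxcy : x = c * y := by
            rw [hcdef, mul_assoc, inv_mul_cancel₀ hy, mul_one]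
          have hcr : c ^ r = 1 := by
            have h1 : f x = c ^ r * f y := by
              simp only [hf, hxcy, mul_pow, hxyq]
              rw [mul_pow, hcq, one_mul]
              ring
            rw [hxy] at h1
            have h2 : c ^ r * f y = 1 * f y := by rw [one_mul, ← h1]
            exact mul_right_cancel₀ (hfne y hy) h2
          -- conclude c = 1 from c^r = c^{q-1} = 1 and gcd = 1
          have cu : Fˣ := Units.mk0 c hc0
          have h1 : (Units.mk0 c hc0) ^ r = 1 :=
            Units.ext (by rw [Units.val_pow_eq_pow_val]; simpa using hcr)
          have h2 : (Units.mk0 c hc0) ^ (q - 1) = 1 :=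
            Units.ext (by rw [Units.val_pow_eq_pow_val]; simpa using hcq)
          have hdvd : orderOf (Units.mk0 c hc0) ∣ Nat.gcd r (q - 1) :=
            Nat.dvd_gcd (orderOf_dvd_of_pow_eq_one h1) (orderOf_dvd_of_pow_eq_one h2)
          rw [hgcd, Nat.dvd_one, orderOf_eq_one_iff] at hdvd
          have hc1 : c = 1 := by
            have := congrArg Units.val hdvd
            simpa using this
          rw [hxcy, hc1, one_mul]
    exact Finite.injective_iff_bijective.mp hinj
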